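/- Let K be a number field of degree n and suppose K = ℚ(τ) for some Salem number τ of degree n. Then there exists a Salem number τ₀ ∈ K such that the set of Salem numbers of degree n contained in K is exactly the set of positive integer powers {τ₀^m : m ≥ 1} of τ₀. -/

import Mathlib

open Polynomial

noncomputable section

def IsSalemNumber (θ : ℝ) : Prop :=
  1 < θ ∧ IsIntegral ℤ θ ∧
    (∀ z : ℂ, aeval z (minpoly ℚ θ) = 0 → z ≠ (θ : ℂ) → ‖z‖ ≤ 1) ∧
    (∃ z : ℂ, aeval z (minpoly ℚ θ) = 0 ∧ ‖z‖ = 1)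

namespace SalemAux

lemma minpoly_ofReal (θ : ℝ) : minpoly ℚ ((θ : ℂ)) = minpoly ℚ θ :=
  minpoly.algHom_eq (Complex.ofRealAm.restrictScalars ℚ)
    (fun a b h => by simpa using h) θ

variable {θ : ℝ}

lemma intQ (h : IsIntegral ℤ θ) : IsIntegral ℚ θ := h.tower_top

lemma salem_intQ (hθ : IsSalemNumber θ) : IsIntegral ℚ θ := intQ hθ.2.1

lemma salem_pos (hθ : IsSalemNumber θ) : 0 < θ := lt_trans one_pos hθ.1

lemma salem_root_self (hθ : IsSalemNumber θ) : aeval ((θ:ℂ)) (minpoly ℚ θ) = 0 := by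
  rw [← minpoly_ofReal θ]
  exact minpoly.aeval ℚ _

lemma not_root_zero (hθ : IsSalemNumber θ) : aeval (0:ℂ) (minpoly ℚ θ) ≠ 0 := by
  rw [aeval_def, eval₂_at_zero]
  simpa using minpoly.coeff_zero_ne_zero (salem_intQ hθ) (salem_pos hθ).ne'

lemma not_root_one (hθ : IsSalemNumber θ) : aeval (1:ℂ) (minpoly ℚ θ) ≠ 0 := by
  intro h
  have hP : minpoly ℚ θ = minpoly ℚ (1:ℂ) :=
    minpoly.eq_of_irreducible_of_monic (minpoly.irreducible (salem_intQ hθ)) h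
      (minpoly.monic (salem_intQ hθ))
  have h1 : minpoly ℚ (1:ℂ) = X - C 1 := by
    simpa using minpoly.eq_X_sub_C ℂ (1:ℚ)
  have := salem_root_self hθ
  rw [hP, h1] at this
  simp only [map_sub, aeval_X, aeval_C, map_one, sub_eq_zero] at this
  have : θ = 1 := by exact_mod_cast this
  linarith [hθ.1]

lemma not_root_negone (hθ : IsSalemNumber θ) : aeval (-1:ℂ) (minpoly ℚ θ) ≠ 0 := by
  intro h
  have hP : minpoly ℚ θ = minpoly ℚ (-1:ℂ) :=
    minpoly.eq_of_irreducible_of_monic (minpoly.irreducible (salem_intQ hθ)) h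
      (minpoly.monic (salem_intQ hθ))
  have h1 : minpoly ℚ (-1:ℂ) = X - C (-1) := by
    simpa using minpoly.eq_X_sub_C ℂ (-1:ℚ)
  have := salem_root_self hθ
  rw [hP, h1] at this
  simp only [map_sub, aeval_X, aeval_C, map_neg, map_one, sub_neg_eq_add, map_add, aeval_one] at this
  have h2 : (θ:ℂ) = -1 := eq_neg_of_add_eq_zero_left this
  have : θ = -1 := by exact_mod_cast h2
  linarith [hθ.1]

lemma root_conj (hθ : IsSalemNumber θ) {z : ℂ} (hz : aeval z (minpoly ℚ θ) = 0) :
    aeval ((starRingEnd ℂ) z) (minpoly ℚ θ) = 0 := by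
  have h := Polynomial.hom_eval₂ (p := minpoly ℚ θ) (f := algebraMap ℚ ℂ)
    (g := (starRingEnd ℂ)) z
  rw [aeval_def] at hz ⊢
  rw [hz, map_zero] at h
  rw [← h.symm]
  congr 1
  exact Subsingleton.elim _ _

lemma root_ne_zero (hθ : IsSalemNumber θ) {z : ℂ} (hz : aeval z (minpoly ℚ θ) = 0) :
    z ≠ 0 := by
  rintro rfl; exact not_root_zero hθ hz

lemma root_inv (hθ : IsSalemNumber θ) {z : ℂ} (hz : aeval z (minpoly ℚ θ) = 0) :
    aeval z⁻¹ (minpoly ℚ θ) = 0 := by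
  set P := minpoly ℚ θ with hPdef
  have hint := salem_intQ hθ
  have hP0 : P ≠ 0 := minpoly.ne_zero hint
  obtain ⟨z₀, hz₀, habs⟩ := hθ.2.2.2
  have hz₀ne : z₀ ≠ 0 := root_ne_zero hθ hz₀
  -- conj z₀ = z₀⁻¹ is a root
  have hconj : aeval z₀⁻¹ P = 0 := by
    have : z₀⁻¹ = (starRingEnd ℂ) z₀ := by
      rw [Complex.inv_def, Complex.normSq_eq_norm_sq, habs]; simp
    rw [this]; exact root_conj hθ hz₀
  -- P divides reverse P
  have hPz₀ : P = minpoly ℚ z₀ :=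
    minpoly.eq_of_irreducible_of_monic (minpoly.irreducible hint) hz₀ (minpoly.monic hint)
  have hrev0 : aeval z₀ P.reverse = 0 := by
    have : Invertible (z₀⁻¹) := invertibleOfNonzero (inv_ne_zero hz₀ne)
    have h := Polynomial.eval₂_reverse_eq_zero_iff (algebraMap ℚ ℂ) (z₀⁻¹) P
    rw [invOf_eq_inv, inv_inv] at h
    rw [aeval_def]
    exact h.mpr hconj
  have hdvd : P ∣ P.reverse := by
    have h := minpoly.dvd ℚ z₀ hrev0
    rwa [← hPz₀] at h
  obtain ⟨R, hR⟩ := hdvd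
  have hrevne : P.reverse ≠ 0 := by simpa [Polynomial.reverse_eq_zero] using hP0
  have hRne : R ≠ 0 := by rintro rfl; rw [mul_zero] at hR; exact hrevne hR
  have hdegR : R.natDegree = 0 := by
    have h1 : P.reverse.natDegree ≤ P.natDegree := Polynomial.reverse_natDegree_le P
    have h2 : P.reverse.natDegree = P.natDegree + R.natDegree := by
      rw [hR]; exact Polynomial.natDegree_mul hP0 hRne
    omega
  obtain ⟨c, rfl⟩ : ∃ c, R = C c := ⟨R.coeff 0, (Polynomial.eq_C_of_natDegree_eq_zero hdegR)⟩
  have hcne : c ≠ 0 := by rintro rfl; simp at hRne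
  -- now use reverse at z
  have hzne : z ≠ 0 := root_ne_zero hθ hz
  have hrevz : aeval z⁻¹ P.reverse = 0 := by
    have : Invertible z := invertibleOfNonzero hzne
    have h := Polynomial.eval₂_reverse_eq_zero_iff (algebraMap ℚ ℂ) z P
    rw [invOf_eq_inv] at h
    rw [aeval_def]
    exact h.mpr (by rw [← aeval_def]; exact hz)
  rw [hR] at hrevz
  simp only [map_mul, aeval_C] at hrevz
  rcases mul_eq_zero.mp hrevz with h | h
  · exact h
  · exact absurd h (by simpa using hcne)

lemma inv_root (hθ : IsSalemNumber θ) : aeval ((θ⁻¹ : ℝ) : ℂ) (minpoly ℚ θ) = 0 := by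
  have := root_inv hθ (salem_root_self hθ)
  rwa [← Complex.ofReal_inv] at this

lemma root_abs (hθ : IsSalemNumber θ) {z : ℂ} (hz : aeval z (minpoly ℚ θ) = 0)
    (h1 : z ≠ (θ : ℂ)) (h2 : z ≠ ((θ⁻¹ : ℝ) : ℂ)) :
    ‖z‖ = 1 ∧ z.im ≠ 0 := by
  have hzne : z ≠ 0 := root_ne_zero hθ hz
  have hle : ‖z‖ ≤ 1 := hθ.2.2.1 z hz h1
  have hinv : aeval z⁻¹ (minpoly ℚ θ) = 0 := root_inv hθ hz
  have hinvne : z⁻¹ ≠ (θ : ℂ) := by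
    intro h
    apply h2
    rw [← inv_inv z, h, Complex.ofReal_inv]
  have hle2 : ‖z⁻¹‖ ≤ 1 := hθ.2.2.1 z⁻¹ hinv hinvne
  rw [norm_inv] at hle2
  have habs : ‖z‖ = 1 := by
    have h0 : 0 < ‖z‖ := norm_pos_iff.mpr hzne
    have := (inv_le_one₀ h0).mp hle2
    linarith
  refine ⟨habs, fun him => ?_⟩
  have hre : z = ((z.re : ℝ) : ℂ) := by
    exact Complex.ext rfl (by simpa using him)
  rw [hre] at habs
  rw [Complex.norm_real, Real.norm_eq_abs] at habs
  rcases abs_eq (by norm_num : (0:ℝ) ≤ 1) |>.mp habs with h | h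
  · apply not_root_one hθ; rw [← hz, hre, h]; norm_num
  · apply not_root_negone hθ; rw [← hz, hre, h]; norm_num

lemma theta_ne_inv (hθ : IsSalemNumber θ) : (θ:ℂ) ≠ ((θ⁻¹:ℝ):ℂ) := by
  intro h
  have : θ = θ⁻¹ := by exact_mod_cast h
  have hpos := salem_pos hθ
  have h2 : θ * θ = 1 := by
    nth_rewrite 2 [this]
    field_simp
  nlinarith [hθ.1]

lemma abs_ofReal_self (hθ : IsSalemNumber θ) : ‖(θ:ℂ)‖ = θ := by
  rw [Complex.norm_real, Real.norm_eq_abs]; exact abs_of_pos (salem_pos hθ)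

lemma abs_ofReal_inv (hθ : IsSalemNumber θ) : ‖((θ⁻¹:ℝ):ℂ)‖ = θ⁻¹ := by
  rw [Complex.norm_real, Real.norm_eq_abs]; exact abs_of_pos (inv_pos.mpr (salem_pos hθ))

lemma coeff_zero_abs_one (hθ : IsSalemNumber θ) :
    ‖(algebraMap ℚ ℂ) ((minpoly ℚ θ).coeff 0)‖ = 1 := by
  classical
  set P := minpoly ℚ θ with hPdef
  have hint := salem_intQ hθ
  have hmonic := minpoly.monic hint
  set Pc : ℂ[X] := P.map (algebraMap ℚ ℂ) with hPc
  have hPcmonic : Pc.Monic := hmonic.map _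
  have hPcne : Pc ≠ 0 := hPcmonic.ne_zero
  have hsplits : Pc.Splits := IsAlgClosed.splits Pc
  have hsep : Pc.Separable := ((minpoly.irreducible hint).separable).map
  have hnodup : Pc.roots.Nodup := nodup_roots hsep
  -- roots membership ↔ aeval
  have hmem : ∀ z : ℂ, z ∈ Pc.roots ↔ aeval z P = 0 := by
    intro z
    rw [mem_roots hPcne, IsRoot.def, eval_map, ← aeval_def]
  -- product formula
  have hprod : Pc = (Pc.roots.map fun r => X - C r).prod := by
    conv_lhs => rw [hsplits.eq_prod_roots_of_monic hPcmonic]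
  have heval : Pc.eval 0 = (Pc.roots.map fun r => -r).prod := by
    conv_lhs => rw [hprod]
    rw [eval_multiset_prod]
    rw [Multiset.map_map]
    congr 1
    apply Multiset.map_congr rfl
    intro r _
    simp
  have habs : ‖Pc.eval 0‖ = (Pc.roots.map (fun z => ‖z‖)).prod := by
    rw [heval, show ∀ m : Multiset ℂ, ‖m.prod‖ = (m.map fun x => ‖x‖).prod from fun m => map_multiset_prod (normHom : ℂ →*₀ ℝ) m, Multiset.map_map]
    congr 1
    apply Multiset.map_congr rfl
    intro r _
    simp
  -- compute the product over the finset of roots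
  set S : Finset ℂ := Pc.roots.toFinset with hS
  have hSval : S.val = Pc.roots := Multiset.dedup_eq_self.mpr hnodup
  have hprodS : (Pc.roots.map (fun z => ‖z‖)).prod = ∏ z ∈ S, ‖z‖ := by
    rw [Finset.prod, hSval]
  have hmθ : (θ:ℂ) ∈ S := by
    rw [Multiset.mem_toFinset, hmem]; exact salem_root_self hθ
  have hmθi : ((θ⁻¹:ℝ):ℂ) ∈ S := by
    rw [Multiset.mem_toFinset, hmem]; exact inv_root hθ
  have hne := theta_ne_inv hθ
  have hmθi' : ((θ⁻¹:ℝ):ℂ) ∈ S.erase (θ:ℂ) := Finset.mem_erase.mpr ⟨fun h => hne h.symm, hmθi⟩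
  have hrest : ∀ z ∈ (S.erase (θ:ℂ)).erase ((θ⁻¹:ℝ):ℂ), ‖z‖ = 1 := by
    intro z hzmem
    have h2 := (Finset.mem_erase.mp hzmem).1
    have h3 := Finset.mem_erase.mp (Finset.mem_erase.mp hzmem).2
    have hzroot : aeval z P = 0 := (hmem z).mp (Multiset.mem_toFinset.mp h3.2)
    exact (root_abs hθ hzroot h3.1 h2).1
  have hcalc : ∏ z ∈ S, ‖z‖ = 1 := by
    rw [← Finset.mul_prod_erase S _ hmθ, ← Finset.mul_prod_erase _ _ hmθi']
    rw [Finset.prod_eq_one hrest, abs_ofReal_self hθ, abs_ofReal_inv hθ]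
    rw [mul_one, mul_inv_cancel₀ (salem_pos hθ).ne']
  have h0 : Pc.eval 0 = (algebraMap ℚ ℂ) (P.coeff 0) := by
    rw [hPc, eval_map, eval₂_at_zero]
  rw [← h0, habs, hprodS, hcalc]

lemma minpoly_int_coeff_zero (hθ : IsSalemNumber θ) :
    (minpoly ℤ θ).coeff 0 = 1 ∨ (minpoly ℤ θ).coeff 0 = -1 := by
  have hint := hθ.2.1
  have heq : minpoly ℚ θ = (minpoly ℤ θ).map (algebraMap ℤ ℚ) :=
    minpoly.isIntegrallyClosed_eq_field_fractions ℚ ℝ hint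
  have habs := coeff_zero_abs_one hθ
  rw [heq, coeff_map] at habs
  set c := (minpoly ℤ θ).coeff 0 with hc
  have hcast : (algebraMap ℚ ℂ) ((algebraMap ℤ ℚ) c) = (c:ℂ) := by
    rw [eq_intCast (algebraMap ℤ ℚ) c, map_intCast]
  rw [hcast] at habs
  have : ‖(c : ℂ)‖ = 1 := habs
  rw [Complex.norm_intCast] at this
  have h1 : |c| = 1 := by exact_mod_cast this
  rcases (abs_eq (by norm_num : (0:ℤ) ≤ 1)).mp h1 with h | h
  · exact Or.inl h
  · exact Or.inr h

lemma salem_inv_isIntegral (hθ : IsSalemNumber θ) : IsIntegral ℤ θ⁻¹ := by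
  have hint := hθ.2.1
  set Pz := minpoly ℤ θ with hPz
  have hkey : X * Pz.divX + C (Pz.coeff 0) = Pz := X_mul_divX_add Pz
  have haev : aeval θ Pz = 0 := minpoly.aeval ℤ θ
  set q : ℝ := aeval θ Pz.divX with hq
  have heval : θ * q + ((Pz.coeff 0 : ℤ) : ℝ) = 0 := by
    have := congrArg (aeval θ) hkey
    rw [haev] at this
    simpa [hq] using this
  have hqint : IsIntegral ℤ q :=
    IsIntegral.of_mem_of_fg (Algebra.adjoin ℤ {θ}) hint.fg_adjoin_singleton q
      (aeval_mem_adjoin_singleton ℤ θ)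
  rcases minpoly_int_coeff_zero hθ with h | h
  · have : θ⁻¹ = -q := by
      have hmul : θ * (-q) = 1 := by rw [h] at heval; push_cast at heval; nlinarith [heval]
      exact (eq_inv_of_mul_eq_one_right hmul).symm
    rw [this]; exact hqint.neg
  · have : θ⁻¹ = q := by
      have hmul : θ * q = 1 := by rw [h] at heval; push_cast at heval; linarith
      exact (eq_inv_of_mul_eq_one_right hmul).symm
    rw [this]; exact hqint

lemma three_le_natDegree (hθ : IsSalemNumber θ) : 3 ≤ (minpoly ℚ θ).natDegree := by
  classical
  set P := minpoly ℚ θ with hPdef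
  have hint := salem_intQ hθ
  set Pc : ℂ[X] := P.map (algebraMap ℚ ℂ) with hPc
  have hPcne : Pc ≠ 0 := ((minpoly.monic hint).map _).ne_zero
  have hmem : ∀ z : ℂ, aeval z P = 0 → z ∈ Pc.roots.toFinset := by
    intro z hz
    rw [Multiset.mem_toFinset, mem_roots hPcne, IsRoot.def, eval_map, ← aeval_def]
    exact hz
  obtain ⟨z₀, hz₀, habs⟩ := hθ.2.2.2
  have h1 : z₀ ≠ (θ:ℂ) := by
    intro h; rw [h, abs_ofReal_self hθ] at habs; linarith [hθ.1]
  have h2 : z₀ ≠ ((θ⁻¹:ℝ):ℂ) := by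
    intro h; rw [h, abs_ofReal_inv hθ] at habs
    have h3 : θ = 1 := inv_eq_one.mp habs
    linarith [hθ.1]
  have hsub : ({(θ:ℂ), ((θ⁻¹:ℝ):ℂ), z₀} : Finset ℂ) ⊆ Pc.roots.toFinset := by
    intro z hz
    simp only [Finset.mem_insert, Finset.mem_singleton] at hz
    rcases hz with rfl | rfl | rfl
    · exact hmem _ (salem_root_self hθ)
    · exact hmem _ (inv_root hθ)
    · exact hmem _ hz₀
  have hcard : ({(θ:ℂ), ((θ⁻¹:ℝ):ℂ), z₀} : Finset ℂ).card = 3 := by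
    rw [Finset.card_insert_of_notMem, Finset.card_insert_of_notMem, Finset.card_singleton]
    · simp only [Finset.mem_singleton]; exact fun h => h2 h.symm
    · simp only [Finset.mem_insert, Finset.mem_singleton]
      push_neg
      exact ⟨theta_ne_inv hθ, fun h => h1 h.symm⟩
  calc 3 = ({(θ:ℂ), ((θ⁻¹:ℝ):ℂ), z₀} : Finset ℂ).card := hcard.symm
    _ ≤ Pc.roots.toFinset.card := Finset.card_le_card hsub
    _ ≤ Multiset.card Pc.roots := Multiset.toFinset_card_le _
    _ ≤ Pc.natDegree := Pc.card_roots'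
    _ = P.natDegree := (minpoly.monic hint).natDegree_map _


variable {K : IntermediateField ℚ ℂ} [NumberField ↥K]

lemma minpoly_val (x : ↥K) : minpoly ℚ ((x:ℂ)) = minpoly ℚ x :=
  minpoly.algHom_eq K.val Subtype.val_injective x

lemma intQ_of_K (x : ↥K) : IsIntegral ℚ x := .of_finite ℚ x

lemma root_exists (x : ↥K) {z : ℂ} (hz : aeval z (minpoly ℚ x) = 0) :
    ∃ φ : ↥K →+* ℂ, φ x = z := by
  have hmem : z ∈ (minpoly ℚ x).rootSet ℂ :=
    mem_rootSet.mpr ⟨minpoly.ne_zero (intQ_of_K x), hz⟩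
  rw [← NumberField.Embeddings.range_eval_eq_rootSet_minpoly ↥K ℂ x] at hmem
  exact hmem

lemma root_of_emb (x : ↥K) (φ : ↥K →+* ℂ) : aeval (φ x) (minpoly ℚ x) = 0 := by
  have : φ x ∈ (minpoly ℚ x).rootSet ℂ := by
    rw [← NumberField.Embeddings.range_eval_eq_rootSet_minpoly ↥K ℂ x]
    exact ⟨φ, rfl⟩
  exact (mem_rootSet.mp this).2

lemma gen_ext {x : ↥K} (hx : Algebra.adjoin ℚ {x} = ⊤) {φ ψ : ↥K →+* ℂ}
    (h : φ x = ψ x) : φ = ψ := by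
  have hle : Algebra.adjoin ℚ {x} ≤ AlgHom.equalizer φ.toRatAlgHom ψ.toRatAlgHom :=
    Algebra.adjoin_le (by simpa using h)
  rw [hx] at hle
  ext a
  exact hle (Algebra.mem_top (R := ℚ) (A := ↥K))

lemma top_of_deg {x : ↥K} (hdeg : (minpoly ℚ x).natDegree = Module.finrank ℚ ↥K) :
    Algebra.adjoin ℚ {x} = ⊤ := by
  have hx := intQ_of_K x
  set F : IntermediateField ℚ ↥K := IntermediateField.adjoin ℚ {x} with hF
  have h1 : Module.finrank ℚ (↥F) = (minpoly ℚ x).natDegree :=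
    IntermediateField.adjoin.finrank hx
  have h2 : F = (⊤ : IntermediateField ℚ ↥K) := by
    apply IntermediateField.eq_of_le_of_finrank_eq le_top
    rw [h1, hdeg]
    exact (IntermediateField.topEquiv.toLinearEquiv.finrank_eq).symm
  have h3 := IntermediateField.adjoin_simple_toSubalgebra_of_isAlgebraic hx.isAlgebraic
  rw [hF] at h2
  rw [← h3, h2]
  rfl

set_option synthInstance.maxHeartbeats 400000 in
set_option maxHeartbeats 1000000 in
lemma deg_of_fix (x : ↥K)
    (hfix : ∀ φ : ↥K →+* ℂ, φ x = (x:ℂ) → φ = K.val.toRingHom) :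
    (minpoly ℚ x).natDegree = Module.finrank ℚ ↥K := by
  have hx := intQ_of_K x
  set F : IntermediateField ℚ ↥K := IntermediateField.adjoin ℚ {x} with hF
  letI : Algebra (↥F) ℂ := ((K.val.toRingHom).comp (F.val.toRingHom)).toAlgebra
  have hxF : x ∈ F := IntermediateField.mem_adjoin_simple_self ℚ x
  have hψ₀comm : ∀ r : ↥F, (K.val.toRingHom) ((algebraMap (↥F) ↥K) r) = algebraMap (↥F) ℂ r :=
    fun r => rfl
  let ψ₀ : ↥K →ₐ[↥F] ℂ := { toRingHom := K.val.toRingHom, commutes' := hψ₀comm }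
  have huniq : ∀ ψ : ↥K →ₐ[↥F] ℂ, ψ = ψ₀ := by
    intro ψ
    have hx' : ψ.toRingHom x = (x:ℂ) := ψ.commutes ⟨x, hxF⟩
    have h2 : ψ.toRingHom = K.val.toRingHom := hfix _ hx'
    apply AlgHom.coe_ringHom_injective
    exact h2
  have hcard : Fintype.card (↥K →ₐ[↥F] ℂ) = Module.finrank (↥F) ↥K := AlgHom.card (↥F) ↥K ℂ
  have hone : Module.finrank (↥F) ↥K = 1 := by
    rw [← hcard]
    exact Fintype.card_eq_one_iff.mpr ⟨ψ₀, huniq⟩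
  have hmul : Module.finrank ℚ (↥F) * Module.finrank (↥F) ↥K = Module.finrank ℚ ↥K :=
    Module.finrank_mul_finrank ℚ (↥F) ↥K
  rw [hone, mul_one] at hmul
  rw [← hmul]
  exact (IntermediateField.adjoin.finrank hx).symm


lemma int_K {K : IntermediateField ℚ ℂ} {u : ℝ} (h : (u:ℂ) ∈ K) (hu : IsIntegral ℤ u) :
    IsIntegral ℤ (⟨(u:ℂ), h⟩ : ↥K) := by
  have h2 : IsIntegral ℤ ((u:ℂ)) := hu.map Complex.ofRealHom.toIntAlgHom
  exact (isIntegral_algHom_iff (K.val.toRingHom.toIntAlgHom) Subtype.val_injective).mp h2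


def ρ (K : IntermediateField ℚ ℂ) : ↥K →+* ℂ := K.val.toRingHom

def Good (K : IntermediateField ℚ ℂ) (σ₁ : ↥K →+* ℂ) (u : ℝ) : Prop :=
  0 < u ∧ IsIntegral ℤ u ∧ IsIntegral ℤ u⁻¹ ∧
  ∃ h : (u:ℂ) ∈ K, σ₁ ⟨(u:ℂ), h⟩ = ((u⁻¹ : ℝ) : ℂ) ∧
    ∀ φ : ↥K →+* ℂ, φ ≠ ρ K → φ ≠ σ₁ → ‖φ ⟨(u:ℂ), h⟩‖ = 1

variable {K : IntermediateField ℚ ℂ} [NumberField ↥K] {σ₁ : ↥K →+* ℂ}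

lemma Good.mul {u v : ℝ} (hu : Good K σ₁ u) (hv : Good K σ₁ v) : Good K σ₁ (u * v) := by
  obtain ⟨hup, hui, hui', hK, hσ, hφ⟩ := hu
  obtain ⟨hvp, hvi, hvi', hK2, hσ2, hφ2⟩ := hv
  have hKm : ((u * v : ℝ) : ℂ) ∈ K := by rw [Complex.ofReal_mul]; exact mul_mem hK hK2
  have hsub : (⟨((u * v : ℝ) : ℂ), hKm⟩ : ↥K) = ⟨(u:ℂ), hK⟩ * ⟨(v:ℂ), hK2⟩ := by
    apply Subtype.ext
    push_cast
    rfl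
  refine ⟨mul_pos hup hvp, hui.mul hvi, ?_, hKm, ?_, ?_⟩
  · rw [mul_inv]; exact hui'.mul hvi'
  · rw [hsub, map_mul, hσ, hσ2]
    push_cast
    rw [mul_inv]
  · intro φ h1 h2
    rw [hsub, map_mul, norm_mul, hφ φ h1 h2, hφ2 φ h1 h2, mul_one]

lemma Good.inv {u : ℝ} (hu : Good K σ₁ u) : Good K σ₁ u⁻¹ := by
  obtain ⟨hup, hui, hui', hK, hσ, hφ⟩ := hu
  have hKm : ((u⁻¹ : ℝ) : ℂ) ∈ K := by rw [Complex.ofReal_inv]; exact inv_mem hK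
  have hsub : (⟨((u⁻¹ : ℝ) : ℂ), hKm⟩ : ↥K) = (⟨(u:ℂ), hK⟩)⁻¹ := by
    apply Subtype.ext
    push_cast
    rfl
  refine ⟨inv_pos.mpr hup, hui', by rw [inv_inv]; exact hui, hKm, ?_, ?_⟩
  · rw [hsub, map_inv₀, hσ, inv_inv]
    push_cast
    rw [inv_inv]
  · intro φ h1 h2
    rw [hsub, map_inv₀, norm_inv, hφ φ h1 h2, inv_one]

lemma Good.one : Good K σ₁ 1 := by
  have hKm : ((1 : ℝ) : ℂ) ∈ K := by rw [Complex.ofReal_one]; exact one_mem K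
  have hsub : (⟨((1 : ℝ) : ℂ), hKm⟩ : ↥K) = 1 := by
    apply Subtype.ext; push_cast; rfl
  refine ⟨one_pos, isIntegral_one, by rw [inv_one]; exact isIntegral_one, hKm, ?_, ?_⟩
  · rw [hsub, map_one, inv_one, Complex.ofReal_one]
  · intro φ h1 h2
    rw [hsub, map_one, norm_one]

lemma Good.pow {u : ℝ} (hu : Good K σ₁ u) (m : ℕ) : Good K σ₁ (u ^ m) := by
  induction m with
  | zero => simpa using Good.one
  | succ k ih => rw [pow_succ]; exact ih.mul hu

lemma rho_apply (x : ↥K) : ρ K x = (x : ℂ) := rfl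

lemma good_salem {n : ℕ} (hn : Module.finrank ℚ ↥K = n)
    (hthird : ∃ φ : ↥K →+* ℂ, φ ≠ ρ K ∧ φ ≠ σ₁)
    {u : ℝ} (hu : Good K σ₁ u) (h1 : 1 < u) :
    IsSalemNumber u ∧ (u:ℂ) ∈ K ∧ (minpoly ℚ u).natDegree = n := by
  obtain ⟨hup, hui, hui', hK, hσ, hφ⟩ := hu
  set x : ↥K := ⟨(u:ℂ), hK⟩ with hx
  have hmp : minpoly ℚ u = minpoly ℚ x := by
    rw [← minpoly_ofReal u]
    exact minpoly_val x
  have hfix : ∀ φ : ↥K →+* ℂ, φ x = (x:ℂ) → φ = K.val.toRingHom := by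
    intro φ hfeq
    by_contra hne
    by_cases h2 : φ = σ₁
    · rw [h2, hσ] at hfeq
      have hfeq' : ((u⁻¹:ℝ):ℂ) = ((u:ℝ):ℂ) := hfeq
      have heq : (u⁻¹ : ℝ) = u := by exact_mod_cast hfeq'
      nlinarith [mul_inv_cancel₀ (ne_of_gt hup), heq, h1]
    · have habs := hφ φ hne h2
      rw [hfeq] at habs
      have : ‖(u:ℂ)‖ = u := by
        rw [Complex.norm_real, Real.norm_eq_abs]; exact abs_of_pos hup
      rw [show ((x:ℂ)) = ((u:ℂ)) from rfl, this] at habs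
      linarith
  have hdeg : (minpoly ℚ u).natDegree = n := by
    rw [hmp, deg_of_fix x hfix, hn]
  refine ⟨⟨h1, hui, ?_, ?_⟩, hK, hdeg⟩
  · intro z hz hne
    obtain ⟨φ, rfl⟩ := root_exists x (by rw [← hmp]; exact hz)
    by_cases hφρ : φ = ρ K
    · exact absurd (by rw [hφρ]; rfl) hne
    by_cases hφσ : φ = σ₁
    · rw [hφσ, hσ, Complex.norm_real, Real.norm_eq_abs, abs_of_pos (inv_pos.mpr hup)]
      exact le_of_lt (inv_lt_one_of_one_lt₀ h1)
    · rw [hφ φ hφρ hφσ]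
  · obtain ⟨φ₂, hφ2a, hφ2b⟩ := hthird
    refine ⟨φ₂ x, by rw [hmp]; exact root_of_emb x φ₂, hφ φ₂ hφ2a hφ2b⟩

lemma third_emb {n : ℕ} (hn : Module.finrank ℚ ↥K = n)
    {τ : ℝ} (hτ : IsSalemNumber τ) (hτdeg : (minpoly ℚ τ).natDegree = n)
    (σ₁ : ↥K →+* ℂ) : ∃ φ : ↥K →+* ℂ, φ ≠ ρ K ∧ φ ≠ σ₁ := by
  classical
  have h3 : 3 ≤ n := hτdeg ▸ three_le_natDegree hτ
  have hcard : Fintype.card (↥K →+* ℂ) = n := by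
    rw [NumberField.Embeddings.card ↥K ℂ, hn]
  by_contra hcon
  push_neg at hcon
  have hsub : (Finset.univ : Finset (↥K →+* ℂ)) ⊆ {ρ K, σ₁} := by
    intro φ _
    simp only [Finset.mem_insert, Finset.mem_singleton]
    by_cases h : φ = ρ K
    · exact Or.inl h
    · exact Or.inr (hcon φ h)
  have : Fintype.card (↥K →+* ℂ) ≤ 2 := by
    calc Fintype.card (↥K →+* ℂ) = (Finset.univ : Finset (↥K →+* ℂ)).card := rfl
      _ ≤ ({ρ K, σ₁} : Finset (↥K →+* ℂ)).card := Finset.card_le_card hsub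
      _ ≤ 2 := by
          apply le_trans (Finset.card_insert_le _ _)
          simp
  omega

lemma salem_good {n : ℕ} (hn : Module.finrank ℚ ↥K = n)
    {τ : ℝ} (hτ : IsSalemNumber τ) (hτK : (τ:ℂ) ∈ K)
    (hτdeg : (minpoly ℚ τ).natDegree = n)
    (hσ₁ : σ₁ ⟨(τ:ℂ), hτK⟩ = ((τ⁻¹:ℝ):ℂ))
    {θ : ℝ} (hθ : IsSalemNumber θ) (hθK : (θ:ℂ) ∈ K)
    (hθdeg : (minpoly ℚ θ).natDegree = n) : Good K σ₁ θ := by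
  set xτ : ↥K := ⟨(τ:ℂ), hτK⟩ with hxτ
  set xθ : ↥K := ⟨(θ:ℂ), hθK⟩ with hxθ
  have hmpτ : minpoly ℚ τ = minpoly ℚ xτ := by
    rw [← minpoly_ofReal τ]; exact minpoly_val xτ
  have hmpθ : minpoly ℚ θ = minpoly ℚ xθ := by
    rw [← minpoly_ofReal θ]; exact minpoly_val xθ
  have hgenτ : Algebra.adjoin ℚ {xτ} = ⊤ := top_of_deg (by rw [← hmpτ, hτdeg, hn])
  have hgenθ : Algebra.adjoin ℚ {xθ} = ⊤ := top_of_deg (by rw [← hmpθ, hθdeg, hn])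
  have hθpos := salem_pos hθ
  -- the embedding sending θ to θ⁻¹
  obtain ⟨ψ, hψ⟩ := root_exists xθ (by rw [← hmpθ]; exact inv_root hθ)
  have hψρ : ψ ≠ ρ K := by
    intro h
    rw [h, rho_apply] at hψ
    exact theta_ne_inv hθ hψ
  have hψconj : ((starRingEnd ℂ).comp ψ : ↥K →+* ℂ) = ψ := by
    apply gen_ext hgenθ
    show (starRingEnd ℂ) (ψ xθ) = ψ xθ
    rw [hψ, Complex.conj_ofReal]
  have hreal : ((ψ xτ).im = 0) := by
    have : (starRingEnd ℂ) (ψ xτ) = ψ xτ := by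
      conv_rhs => rw [← hψconj]
      rfl
    exact Complex.conj_eq_iff_im.mp this
  have hψτroot : aeval (ψ xτ) (minpoly ℚ τ) = 0 := by
    rw [hmpτ]; exact root_of_emb xτ ψ
  have hψσ : ψ = σ₁ := by
    by_cases hc1 : ψ xτ = (τ:ℂ)
    · exfalso
      exact hψρ (gen_ext hgenτ (by rw [hc1, rho_apply]))
    by_cases hc2 : ψ xτ = ((τ⁻¹:ℝ):ℂ)
    · exact gen_ext hgenτ (by rw [hc2, hσ₁])
    · exact absurd hreal (root_abs hτ hψτroot hc1 hc2).2
  refine ⟨hθpos, hθ.2.1, salem_inv_isIntegral hθ, hθK, ?_, ?_⟩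
  · rw [← hψσ]; exact hψ
  · intro φ h1 h2
    have hroot : aeval (φ xθ) (minpoly ℚ θ) = 0 := by rw [hmpθ]; exact root_of_emb xθ φ
    by_cases hc1 : φ xθ = (θ:ℂ)
    · exact absurd (gen_ext hgenθ (by rw [hc1, rho_apply])) h1
    by_cases hc2 : φ xθ = ((θ⁻¹:ℝ):ℂ)
    · exfalso
      apply h2
      apply gen_ext hgenθ
      rw [hc2, ← hψσ, hψ]
    · exact (root_abs hθ hroot hc1 hc2).1

end SalemAux

open SalemAux IntermediateField in
/-- Salem. If `K` is a number field of degree `n` generated over `ℚ` by a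
Salem number `τ` of degree `n`, then there is a Salem number `τ₀ ∈ K` such that the Salem
numbers of degree `n` contained in `K` are exactly the positive integer powers of `τ₀`. -/
theorem salem_numbers_in_field_are_powers
    (K : IntermediateField ℚ ℂ) [NumberField ↥K] (n : ℕ)
    (hn : Module.finrank ℚ ↥K = n)
    (τ : ℝ) (hτ : IsSalemNumber τ) (hτdeg : (minpoly ℚ τ).natDegree = n)
    (hgen : IntermediateField.adjoin ℚ {(τ : ℂ)} = K) :
    ∃ τ₀ : ℝ, IsSalemNumber τ₀ ∧ (τ₀ : ℂ) ∈ K ∧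
      ∀ θ : ℝ,
        (IsSalemNumber θ ∧ (θ : ℂ) ∈ K ∧ (minpoly ℚ θ).natDegree = n) ↔
          ∃ m : ℕ, 1 ≤ m ∧ θ = τ₀ ^ m := by
  classical
  have hτK : (τ : ℂ) ∈ K := by
    rw [← hgen]
    exact IntermediateField.mem_adjoin_simple_self ℚ ((τ:ℂ))
  set xτ : ↥K := ⟨(τ:ℂ), hτK⟩ with hxτ
  have hmpτ : minpoly ℚ τ = minpoly ℚ xτ := by
    rw [← minpoly_ofReal τ]; exact minpoly_val xτ
  obtain ⟨σ₁, hσ₁⟩ := root_exists xτ (z := ((τ⁻¹:ℝ):ℂ)) (by rw [← hmpτ]; exact inv_root hτ)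
  set SalProp : ℝ → Prop :=
    fun θ => IsSalemNumber θ ∧ (θ : ℂ) ∈ K ∧ (minpoly ℚ θ).natDegree = n with hSalProp
  have hSG : ∀ θ : ℝ, SalProp θ → Good K σ₁ θ := by
    rintro θ ⟨h1, h2, h3⟩
    exact salem_good hn hτ hτK hτdeg hσ₁ h1 h2 h3
  have hthird := third_emb hn hτ hτdeg σ₁
  have hGS : ∀ u : ℝ, Good K σ₁ u → 1 < u → SalProp u := by
    intro u hu h1
    exact good_salem hn hthird hu h1
  have hτSal : SalProp τ := ⟨hτ, hτK, hτdeg⟩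
  -- Finiteness of small Salem numbers
  set T : Set ℝ := {θ : ℝ | SalProp θ ∧ θ ≤ τ} with hT
  set f : ℝ → ↥K := fun θ => if h : (θ:ℂ) ∈ K then (⟨(θ:ℂ), h⟩ : ↥K) else 0 with hf
  have hτ1 : (1:ℝ) < τ := hτ.1
  have hTfin : T.Finite := by
    apply Set.Finite.of_finite_image (f := f)
    · apply Set.Finite.subset (NumberField.Embeddings.finite_of_norm_le ↥K ℂ τ)
      rintro x ⟨θ, hθT, rfl⟩
      obtain ⟨⟨hθS, hθK, hθdeg⟩, hθle⟩ := hθT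
      have hfθ : f θ = (⟨(θ:ℂ), hθK⟩ : ↥K) := dif_pos hθK
      obtain ⟨hθpos, hθint, hθinv, hKmem, hσval, hφval⟩ := hSG θ ⟨hθS, hθK, hθdeg⟩
      rw [hfθ]
      constructor
      · exact int_K hθK hθint
      · intro φ
        by_cases hc1 : φ = ρ K
        · rw [hc1]
          show ‖(θ:ℂ)‖ ≤ τ
          rw [Complex.norm_real, Real.norm_eq_abs, abs_of_pos hθpos]
          exact hθle
        by_cases hc2 : φ = σ₁
        · rw [hc2]
          have : (⟨(θ:ℂ), hθK⟩ : ↥K) = ⟨(θ:ℂ), hKmem⟩ := rfl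
          rw [this, hσval]
          show ‖((θ⁻¹:ℝ):ℂ)‖ ≤ τ
          rw [Complex.norm_real, Real.norm_eq_abs, abs_of_pos (inv_pos.mpr hθpos)]
          have : θ⁻¹ ≤ 1 := le_of_lt (inv_lt_one_of_one_lt₀ hθS.1)
          linarith
        · have : (⟨(θ:ℂ), hθK⟩ : ↥K) = ⟨(θ:ℂ), hKmem⟩ := rfl
          rw [this]
          show ‖_‖ ≤ τ
          rw [hφval φ hc1 hc2]
          linarith
    · rintro θ₁ hθ₁ θ₂ hθ₂ heq
      simp only [hf] at heq
      rw [dif_pos hθ₁.1.2.1, dif_pos hθ₂.1.2.1] at heq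
      have : (θ₁ : ℂ) = (θ₂ : ℂ) := congrArg Subtype.val heq
      exact_mod_cast this
  have hτT : τ ∈ T := ⟨hτSal, le_refl τ⟩
  obtain ⟨τ₀, hτ₀T, hτ₀min⟩ := Set.exists_min_image T id hTfin ⟨τ, hτT⟩
  have hτ₀Sal : SalProp τ₀ := hτ₀T.1
  have hτ₀gt : 1 < τ₀ := hτ₀Sal.1.1
  have hτ₀G : Good K σ₁ τ₀ := hSG τ₀ hτ₀Sal
  have hmin : ∀ θ : ℝ, SalProp θ → τ₀ ≤ θ := by
    intro θ hθ'
    by_cases hle : θ ≤ τ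
    · exact hτ₀min θ ⟨hθ', hle⟩
    · push_neg at hle
      calc τ₀ ≤ τ := hτ₀min τ hτT
        _ ≤ θ := le_of_lt hle
  refine ⟨τ₀, hτ₀Sal.1, hτ₀Sal.2.1, fun θ => ⟨?_, ?_⟩⟩
  · -- forward
    intro hθ'
    have hθG : Good K σ₁ θ := hSG θ hθ'
    have hθgt : 1 < θ := hθ'.1.1
    have hθge : τ₀ ≤ θ := hmin θ hθ'
    have hτ₀pos : 0 < τ₀ := lt_trans one_pos hτ₀gt
    have hex : ∃ k : ℕ, θ < τ₀ ^ k := pow_unbounded_of_one_lt θ hτ₀gt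
    set k := Nat.find hex with hk
    have hkspec : θ < τ₀ ^ k := Nat.find_spec hex
    have hkne : k ≠ 0 := by
      intro h0
      rw [h0, pow_zero] at hkspec
      linarith
    set m := k - 1 with hm
    have hmk : m + 1 = k := by omega
    have hle : τ₀ ^ m ≤ θ := by
      have := Nat.find_min hex (show m < k by omega)
      push_neg at this
      exact this
    have hlt : θ < τ₀ ^ (m + 1) := by rw [hmk]; exact hkspec
    have hpm : 0 < τ₀ ^ m := pow_pos hτ₀pos m
    have huG : Good K σ₁ (θ / τ₀ ^ m) := by
      rw [div_eq_mul_inv]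
      exact hθG.mul ((hτ₀G.pow m).inv)
    have hu1 : 1 ≤ θ / τ₀ ^ m := (one_le_div hpm).mpr hle
    have hult : θ / τ₀ ^ m < τ₀ := by
      rw [div_lt_iff₀ hpm]
      rw [pow_succ] at hlt
      linarith [hlt]
    rcases eq_or_lt_of_le hu1 with heq | hlt1
    · have hθeq : θ = τ₀ ^ m := by
        field_simp at heq
        linarith [heq]
      have hm1 : 1 ≤ m := by
        by_contra hm0
        push_neg at hm0
        interval_cases m
        · rw [pow_zero] at hθeq; linarith
      exact ⟨m, hm1, hθeq⟩
    · exfalso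
      have := hmin _ (hGS _ huG hlt1)
      linarith
  · -- backward
    rintro ⟨m, hm, rfl⟩
    exact hGS _ (hτ₀G.pow m) (one_lt_pow₀ hτ₀gt (by omega))
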